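/- For any ε > 0, any integer ℓ ≥ 1, and any real numbers y_1, …, y_ℓ, the series ∑ 1/(n+1), taken over all integers n ≥ 1 satisfying max_{1≤i≤ℓ} ‖n·y_i‖ < ε, diverges. -/

import Mathlib

open MeasureTheory Filter Set

/-- Distance from a real number to the nearest integer. -/
noncomputable def nint (t : ℝ) : ℝ := |t - (round t : ℝ)|

set_option maxHeartbeats 1000000 in
theorem stmt8 (ε : ℝ) (hε : 0 < ε) (ℓ : ℕ) (hℓ : 1 ≤ ℓ) (y : Fin ℓ → ℝ) :
    ¬ Summable (fun n : ℕ =>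
      if 1 ≤ n ∧ ∀ i : Fin ℓ, nint ((n : ℝ) * y i) < ε then 1 / ((n : ℝ) + 1) else 0) := by
  classical
  set f : ℕ → ℝ := fun n =>
    if 1 ≤ n ∧ ∀ i : Fin ℓ, nint ((n : ℝ) * y i) < ε then 1 / ((n : ℝ) + 1) else 0 with hfdef
  intro hsum
  set M : ℕ := ⌊1/ε⌋₊ + 1 with hMdef
  have hM0 : 0 < M := Nat.succ_pos _
  have hM0' : (0:ℝ) < M := by exact_mod_cast hM0
  have hMε : 1 / (M:ℝ) < ε := by
    have h1 : 1/ε < (M:ℝ) := by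
      have := Nat.lt_floor_add_one (1/ε)
      simpa [hMdef] using this
    rw [div_lt_iff₀ hM0']
    rw [div_lt_iff₀ hε] at h1
    nlinarith
  set c : ℕ := M ^ ℓ with hcdef
  have hc0 : 0 < c := pow_pos hM0 _
  have hc0' : (0:ℝ) < c := by exact_mod_cast hc0
  -- the box map
  have hboxlt : ∀ (n : ℕ) (i : Fin ℓ), ⌊Int.fract ((n:ℝ) * y i) * M⌋₊ < M := by
    intro n i
    rw [Nat.floor_lt (mul_nonneg (Int.fract_nonneg ((n:ℝ) * y i)) hM0'.le)]
    nlinarith [Int.fract_lt_one ((n:ℝ) * y i), Int.fract_nonneg ((n:ℝ) * y i)]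
  set box : ℕ → (Fin ℓ → Fin M) := fun n i => ⟨⌊Int.fract ((n:ℝ) * y i) * M⌋₊, hboxlt n i⟩
    with hboxdef
  -- same box ⇒ difference is in the Bohr set
  have hkey : ∀ m n : ℕ, m < n → box m = box n → ∀ i : Fin ℓ,
      nint (((n - m : ℕ) : ℝ) * y i) < ε := by
    intro m n hmn hbox i
    set a : ℝ := (m:ℝ) * y i
    set b : ℝ := (n:ℝ) * y i
    have hfr : |Int.fract b - Int.fract a| < 1 / M := by
      have hval : ⌊Int.fract a * M⌋₊ = ⌊Int.fract b * M⌋₊ := by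
        have := congrFun hbox i
        simpa [hboxdef, Fin.ext_iff] using this
      set k := ⌊Int.fract a * M⌋₊
      have ha1 : (k:ℝ) ≤ Int.fract a * M :=
        Nat.floor_le (mul_nonneg (Int.fract_nonneg _) hM0'.le)
      have ha2 : Int.fract a * M < k + 1 := Nat.lt_floor_add_one _
      have hb1 : (k:ℝ) ≤ Int.fract b * M := by
        rw [hval]; exact Nat.floor_le (mul_nonneg (Int.fract_nonneg _) hM0'.le)
      have hb2 : Int.fract b * M < k + 1 := by rw [hval]; exact Nat.lt_floor_add_one _
      have hinv : (1 / (M:ℝ)) * M = 1 := by field_simp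
      rw [abs_lt]
      constructor
      · nlinarith
      · nlinarith
    have heq : ((n - m : ℕ) : ℝ) * y i - ((⌊b⌋ - ⌊a⌋ : ℤ) : ℝ)
        = Int.fract b - Int.fract a := by
      rw [Int.fract, Int.fract, Nat.cast_sub hmn.le]
      push_cast
      ring
    have h1 : nint (((n - m : ℕ) : ℝ) * y i)
        ≤ |((n - m : ℕ) : ℝ) * y i - ((⌊b⌋ - ⌊a⌋ : ℤ) : ℝ)| :=
      round_le _ _
    rw [heq] at h1
    exact lt_of_le_of_lt (h1.trans hfr.le) hMε
  -- main counting claim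
  have key : ∀ K : ℕ, ∃ t : Finset ℕ, (∀ n ∈ t, K < n) ∧ 1 / (2 * (c:ℝ)) ≤ ∑ n ∈ t, f n := by
    intro K
    set N : ℕ := c * (2 * (K + 2)) with hNdef
    -- pigeonhole
    obtain ⟨bx, -, hbx⟩ := Finset.exists_le_card_fiber_of_mul_le_card_of_maps_to
      (f := box) (s := Finset.range N) (t := Finset.univ)
      (fun a _ => Finset.mem_univ _) Finset.univ_nonempty
      (n := 2 * (K + 2)) (by
        rw [Finset.card_univ, Finset.card_range]
        have : Fintype.card (Fin ℓ → Fin M) = c := by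
          simp [hcdef, Fintype.card_fun]
        rw [this])
    set F : Finset ℕ := {x ∈ Finset.range N | box x = bx} with hFdef
    have hFne : F.Nonempty := by
      rw [← Finset.card_pos]
      have hF : 2 * (K + 2) ≤ F.card := hbx
      omega
    set m : ℕ := F.min' hFne with hmdef
    have hmF : m ∈ F := Finset.min'_mem _ _
    set D : Finset ℕ := (F.erase m).image (· - m) with hDdef
    have hDcard : D.card = F.card - 1 := by
      rw [hDdef, Finset.card_image_of_injOn, Finset.card_erase_of_mem hmF]
      intro a ha b hb hab
      have ha' : m ≤ a := Finset.min'_le _ _ (Finset.mem_of_mem_erase ha)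
      have hb' : m ≤ b := Finset.min'_le _ _ (Finset.mem_of_mem_erase hb)
      simp only at hab
      omega
    have hDmem : ∀ d ∈ D, 1 ≤ d ∧ d < N ∧ (∀ i : Fin ℓ, nint ((d:ℝ) * y i) < ε) := by
      intro d hd
      rw [hDdef, Finset.mem_image] at hd
      obtain ⟨n, hn, rfl⟩ := hd
      have hnm : n ≠ m := Finset.ne_of_mem_erase hn
      have hnF : n ∈ F := Finset.mem_of_mem_erase hn
      have hmn : m < n := lt_of_le_of_ne (Finset.min'_le _ _ hnF) (Ne.symm hnm)
      have hnN : n < N := by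
        have := hnF; rw [hFdef, Finset.mem_filter, Finset.mem_range] at this; exact this.1
      have hboxeq : box m = box n := by
        have h1 := hmF; have h2 := hnF
        rw [hFdef, Finset.mem_filter] at h1 h2
        rw [h1.2, h2.2]
      exact ⟨by omega, by omega, hkey m n hmn hboxeq⟩
    set t : Finset ℕ := {d ∈ D | K < d} with htdef
    refine ⟨t, fun n hn => (Finset.mem_filter.mp hn).2, ?_⟩
    have htcard : D.card - (K + 1) ≤ t.card := by
      have hsplit : D.card = t.card + {d ∈ D | ¬ K < d}.card := by
        rw [htdef, Finset.card_filter_add_card_filter_not]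
      have hsub : {d ∈ D | ¬ K < d} ⊆ Finset.Icc 1 K := by
        intro d hd
        rw [Finset.mem_filter] at hd
        have := (hDmem d hd.1).1
        rw [Finset.mem_Icc]
        omega
      have := Finset.card_le_card hsub
      rw [Nat.card_Icc] at this
      omega
    have htcard' : K + 2 ≤ t.card := by
      have hF : 2 * (K + 2) ≤ F.card := hbx
      clear_value F D t
      omega
    have hterm : ∀ n ∈ t, 1 / (N:ℝ) ≤ f n := by
      intro n hn
      rw [Finset.mem_filter] at hn
      obtain ⟨h1, h2, h3⟩ := hDmem n hn.1
      rw [hfdef]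
      simp only
      rw [if_pos ⟨h1, h3⟩]
      apply div_le_div_of_nonneg_left (by norm_num) (by positivity)
      have : (n:ℝ) + 1 ≤ N := by exact_mod_cast h2
      linarith
    have hN0' : (0:ℝ) < N := by
      have : 0 < N := by positivity
      exact_mod_cast this
    calc 1 / (2 * (c:ℝ)) ≤ (t.card : ℝ) / N := by
          rw [div_le_div_iff₀ (by positivity) hN0']
          have h1 : ((K:ℝ) + 2) ≤ (t.card : ℝ) := by exact_mod_cast htcard'
          have h2 : (N:ℝ) = (c:ℝ) * (2 * ((K:ℝ) + 2)) := by
            rw [hNdef]; push_cast; ring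
          rw [h2]
          nlinarith
      _ = ∑ _n ∈ t, 1 / (N:ℝ) := by
          rw [Finset.sum_const, nsmul_eq_mul, mul_one_div]
      _ ≤ ∑ n ∈ t, f n := Finset.sum_le_sum hterm
  -- contradiction with summability
  have hvan := summable_iff_vanishing.mp hsum (Set.Iio (1 / (2 * (c:ℝ))))
    (Iio_mem_nhds (by positivity))
  obtain ⟨s, hs⟩ := hvan
  obtain ⟨t, ht1, ht2⟩ := key (s.sup id)
  have hdisj : Disjoint t s := by
    rw [Finset.disjoint_left]
    intro n hn hns
    have h1 := ht1 n hn
    have h2 : n ≤ s.sup id := Finset.le_sup (f := id) hns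
    omega
  have := hs t hdisj
  rw [Set.mem_Iio] at this
  linarith
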